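/- Let a, b ∈ ℚ and let W be the Weierstrass curve y² + a·x·y + b·y = x³ over ℚ (i.e. the Weierstrass curve with coefficients a₁ = a, a₂ = 0, a₃ = b, a₄ = 0, a₆ = 0). Assume its discriminant Δ = b³·(a³ − 27b) is nonzero. Then the affine point (0, 0) lies on W and has order exactly 3 in the group of rational points W(ℚ). -/

import Mathlib

open WeierstrassCurve.Affine in
theorem point_zero_zero_has_order_three (a b : ℚ)
    (W : WeierstrassCurve ℚ) (hW : W = ⟨a, 0, b, 0, 0⟩)
    (hΔ : W.Δ ≠ 0) :
    W.toAffine.Equation 0 0 ∧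
      ∃ h : W.toAffine.Nonsingular 0 0,
        addOrderOf (WeierstrassCurve.Affine.Point.some _ _ h) = 3 := by
  subst hW
  set W : WeierstrassCurve ℚ := ⟨a, 0, b, 0, 0⟩
  have hb : b ≠ 0 := by
    intro h
    apply hΔ
    simp [WeierstrassCurve.Δ, WeierstrassCurve.b₂, WeierstrassCurve.b₄, WeierstrassCurve.b₆,
      WeierstrassCurve.b₈, h, W]
  have heq : W.toAffine.Equation 0 0 := by
    rw [WeierstrassCurve.Affine.equation_iff]; ring
  have hns : W.toAffine.Nonsingular 0 0 := by
    rw [WeierstrassCurve.Affine.nonsingular_iff]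
    refine ⟨heq, Or.inr ?_⟩
    show (0 : ℚ) ≠ -0 - a * 0 - b
    simpa using hb
  refine ⟨heq, hns, ?_⟩
  have hnegY : W.toAffine.negY 0 0 = -b := by
    show -0 - a * 0 - b = -b; ring
  have hy : (0 : ℚ) ≠ W.toAffine.negY 0 0 := by
    rw [hnegY]; simpa using hb
  set L : ℚ := W.toAffine.slope 0 0 0 0 with hLdef
  have hL : L = 0 := by
    rw [hLdef, WeierstrassCurve.Affine.slope_of_Y_ne rfl hy]
    simp
    exact Or.inl rfl
  have hX : W.toAffine.addX 0 0 L = 0 := by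
    rw [hL]; show (0:ℚ)^2 + a * 0 - 0 - 0 - 0 = 0; ring
  have hY : W.toAffine.addY 0 0 0 L = W.toAffine.negY 0 0 := by
    rw [hnegY]
    show -(L * (W.toAffine.addX 0 0 L - 0) + 0) - a * W.toAffine.addX 0 0 L - b = -b
    rw [hX, hL]; ring
  have h3 : (3 : ℕ) • (WeierstrassCurve.Affine.Point.some _ _ hns) = 0 := by
    have h2 : WeierstrassCurve.Affine.Point.some _ _ hns + WeierstrassCurve.Affine.Point.some _ _ hns =
        WeierstrassCurve.Affine.Point.some _ _
          (WeierstrassCurve.Affine.nonsingular_add hns hns fun hxy => hy hxy.2) :=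
      WeierstrassCurve.Affine.Point.add_of_Y_ne hy
    rw [succ_nsmul, two_nsmul]
    rw [h2]
    exact WeierstrassCurve.Affine.Point.add_of_Y_eq hX hY
  exact addOrderOf_eq_prime h3 (WeierstrassCurve.Affine.Point.some_ne_zero hns)
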